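/- arXiv:1302.1742 — 10 statements merged into one kernel-verified Lean document; each statement's English description precedes it below -/
import Mathlib

section
/- Let S be a discrete semigroup and φ a filter on S. The closed set C = { p ∈ βS : φ ⊆ p } (ultrafilters extending φ) is a subsemigroup of βS if and only if for every A ∈ φ and every ultrafilter p ⊇ φ one has Ω_p(A) := { s : s⁻¹A ∈ p } ∈ φ. -/
attribute [local instance] Ultrafilter.mul Ultrafilter.semigroup

theorem closed_subsemigroup_iff {S : Type*} [Semigroup S] (φ : Filter S) [φ.NeBot] :
    (∀ p q : Ultrafilter S, ↑p ≤ φ → ↑q ≤ φ → ↑(p * q) ≤ φ) ↔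
      ∀ A : Set S, A ∈ φ → ∀ p : Ultrafilter S, ↑p ≤ φ →
        {s : S | {t : S | s * t ∈ A} ∈ p} ∈ φ := by
  constructor
  · intro h A hA p hp
    by_contra hΩ
    have hne : (φ ⊓ Filter.principal {s : S | {t : S | s * t ∈ A} ∈ p}ᶜ).NeBot := by
      rw [Filter.neBot_iff]
      intro hb
      rw [Filter.inf_principal_eq_bot, compl_compl] at hb
      exact hΩ hb
    obtain ⟨q, hq⟩ := Ultrafilter.exists_le (φ ⊓ Filter.principal {s : S | {t : S | s * t ∈ A} ∈ p}ᶜ)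
    have hqφ : ↑q ≤ φ := le_trans hq inf_le_left
    have hAqp : A ∈ ↑(q * p) := h q p hqφ hp hA
    have h1 : {s : S | {t : S | s * t ∈ A} ∈ p} ∈ q :=
      (Ultrafilter.eventually_mul q p (· ∈ A)).mp hAqp
    have h2 : {s : S | {t : S | s * t ∈ A} ∈ p}ᶜ ∈ q :=
      le_trans hq inf_le_right (Filter.mem_principal_self _)
    exact (Ultrafilter.compl_notMem_iff.mpr h1) h2
  · intro h p q hp hq A hA
    exact hp (h A hA q hq)
end

section
/- Let S be a discrete semigroup and φ a proper filter on S. The closed set L = { p ∈ βS : φ ⊆ p } is a left ideal of βS if and only if φ is left thick, i.e., for every A ∈ φ and every s ∈ S, s⁻¹A ∈ φ. -/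
attribute [local instance] Ultrafilter.mul Ultrafilter.semigroup

theorem left_ideal_iff_left_thick {S : Type*} [Semigroup S] (φ : Filter S) [φ.NeBot] :
    (∀ q p : Ultrafilter S, ↑p ≤ φ → ↑(q * p) ≤ φ) ↔
      ∀ A : Set S, A ∈ φ → ∀ s : S, {t : S | s * t ∈ A} ∈ φ := by
  constructor
  · intro h A hA s
    rw [Filter.mem_iff_ultrafilter]
    intro p hp
    have := h (pure s) p hp hA
    have := (Ultrafilter.eventually_mul (pure s) p (· ∈ A)).mp this
    simp at this
    exact this
  · intro h q p hp A hA
    refine (Ultrafilter.eventually_mul q p (· ∈ A)).mpr ?_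
    exact Filter.Eventually.of_forall fun s => hp (h A hA s)
end

section
/- Let S be a discrete semigroup and φ a proper filter on S. The closed set R = { p ∈ βS : φ ⊆ p } is a right ideal of βS if and only if for every A ∈ φ and every ultrafilter p on S, Ω_p(A) := { s : s⁻¹A ∈ p } ∈ φ. -/
attribute [local instance] Ultrafilter.mul Ultrafilter.semigroup

theorem right_ideal_iff_omega {S : Type*} [Semigroup S] (φ : Filter S) [φ.NeBot] :
    (∀ p q : Ultrafilter S, ↑p ≤ φ → ↑(p * q) ≤ φ) ↔
      ∀ A : Set S, A ∈ φ → ∀ p : Ultrafilter S,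
        {s : S | {t : S | s * t ∈ A} ∈ p} ∈ φ := by
  have key : ∀ (p q : Ultrafilter S) (A : Set S),
      A ∈ p * q ↔ {s : S | {t : S | s * t ∈ A} ∈ q} ∈ p := by
    intro p q A
    exact Ultrafilter.eventually_mul p q (· ∈ A)
  constructor
  · intro h A hA p
    by_contra hB
    have hne : (φ ⊓ Filter.principal {s : S | {t : S | s * t ∈ A} ∈ p}ᶜ).NeBot := by
      rw [Filter.inf_principal_neBot_iff]
      intro U hU
      by_contra he
      rw [Set.not_nonempty_iff_eq_empty, ← Set.disjoint_iff_inter_eq_empty,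
        Set.disjoint_compl_right_iff_subset] at he
      exact hB (φ.sets_of_superset hU he)
    obtain ⟨r, hr⟩ := Ultrafilter.exists_le (φ ⊓ Filter.principal {s : S | {t : S | s * t ∈ A} ∈ p}ᶜ)
    have hrφ : ↑r ≤ φ := hr.trans inf_le_left
    have hrc : {s : S | {t : S | s * t ∈ A} ∈ p}ᶜ ∈ r :=
      hr (Filter.mem_inf_of_right (Filter.mem_principal_self _))
    have : A ∈ r * p := h r p hrφ hA
    rw [key] at this
    exact absurd hrc (Ultrafilter.compl_notMem_iff.mpr this)
  · intro h p q hp A hA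
    exact (key p q A).2 (hp (h A hA q))
end

section
/- Let S be a discrete semigroup and let K denote the smallest two-sided ideal of βS. If an ultrafilter p belongs to K, then for every A ∈ p the set Ω_p(A) = { s ∈ S : s⁻¹A ∈ p } is syndetic, i.e., there exists a finite F ⊆ S with S = ⋃_{s∈F} s⁻¹Ω_p(A). -/
attribute [local instance] Ultrafilter.mul Ultrafilter.semigroup

/-- `J` is a (nonempty) two-sided ideal of `βS`. -/
def IsIdealBS {S : Type*} [Semigroup S] (J : Set (Ultrafilter S)) : Prop :=
  J.Nonempty ∧ ∀ p ∈ J, ∀ q : Ultrafilter S, q * p ∈ J ∧ p * q ∈ J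

/-- `K` is the smallest two-sided ideal of `βS`. -/
def IsSmallestIdealBS {S : Type*} [Semigroup S] (K : Set (Ultrafilter S)) : Prop :=
  IsIdealBS K ∧ ∀ J : Set (Ultrafilter S), IsIdealBS J → K ⊆ J

/-- `B ⊆ S` is syndetic. -/
def SyndeticIn {S : Type*} [Semigroup S] (B : Set S) : Prop :=
  ∃ F : Finset S, ∀ t : S, ∃ s ∈ F, s * t ∈ B

/-- `A ⊆ S` is piecewise syndetic. -/
def PiecewiseSyndeticIn {S : Type*} [Semigroup S] (A : Set S) : Prop :=
  ∃ F : Finset S, ∀ G : Finset S,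
    (⋂ s ∈ G, {t : S | ∃ u ∈ F, u * (s * t) ∈ A}).Nonempty

section Aux

variable {S : Type*} [Semigroup S]

/-- Membership in a product of ultrafilters. -/
lemma mem_ultra_mul {A : Set S} {U V : Ultrafilter S} :
    A ∈ U * V ↔ {m : S | {m' : S | m * m' ∈ A} ∈ V} ∈ U := Iff.rfl

/-- A "minimal left ideal": a nonempty left ideal `L` of `βS` such that
`βS * y = L` for every `y ∈ L`. -/
def MinLI (L : Set (Ultrafilter S)) : Prop :=
  (L.Nonempty ∧ ∀ y ∈ L, ∀ x : Ultrafilter S, x * y ∈ L) ∧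
    ∀ y ∈ L, Set.range (· * y) = L

lemma range_mul_mem_C (y : Ultrafilter S) :
    (Set.range (· * y)).Nonempty ∧ IsCompact (Set.range (· * y)) ∧
      ∀ z ∈ Set.range (· * y), ∀ x : Ultrafilter S, x * z ∈ Set.range (· * y) := by
  refine ⟨⟨y * y, y, rfl⟩, isCompact_range (Ultrafilter.continuous_mul_left y), ?_⟩
  rintro z ⟨w, rfl⟩ x
  exact ⟨x * w, mul_assoc x w y⟩

/-- Zorn's lemma: there exists a minimal left ideal. -/
lemma exists_minLI [Nonempty S] : ∃ L : Set (Ultrafilter S), MinLI L := by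
  classical
  set 𝒞 : Set (Set (Ultrafilter S)) :=
    {L | L.Nonempty ∧ IsCompact L ∧ ∀ y ∈ L, ∀ x : Ultrafilter S, x * y ∈ L} with h𝒞
  obtain ⟨s⟩ := ‹Nonempty S›
  have hx₀ : Set.range (· * (pure s : Ultrafilter S)) ∈ 𝒞 := range_mul_mem_C _
  have hzorn : ∀ c ⊆ 𝒞, IsChain (· ⊆ ·) c → c.Nonempty →
      ∃ lb ∈ 𝒞, ∀ s ∈ c, lb ⊆ s := by
    intro c hc hchain hcne
    haveI : Nonempty c := hcne.to_subtype
    have hdir : DirectedOn (· ⊇ ·) c := by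
      intro a ha b hb
      rcases hchain.total ha hb with h | h
      · exact ⟨a, ha, Set.Subset.rfl, h⟩
      · exact ⟨b, hb, h, Set.Subset.rfl⟩
    have hne : (⋂₀ c).Nonempty := by
      exact IsCompact.nonempty_sInter_of_directed_nonempty_isCompact_isClosed hdir
        (fun U hU => (hc hU).1) (fun U hU => (hc hU).2.1)
        (fun U hU => (hc hU).2.1.isClosed)
    refine ⟨⋂₀ c, ⟨hne, ?_, ?_⟩, fun s hs => Set.sInter_subset_of_mem hs⟩
    · obtain ⟨U, hU⟩ := hcne
      exact IsCompact.of_isClosed_subset (hc hU).2.1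
        (isClosed_sInter fun V hV => (hc hV).2.1.isClosed) (Set.sInter_subset_of_mem hU)
    · intro y hy x
      exact fun U hU => (hc hU).2.2 y (hy U hU) x
  obtain ⟨m, -, hm⟩ := zorn_superset_nonempty 𝒞 hzorn _ hx₀
  refine ⟨m, ⟨⟨hm.prop.1, hm.prop.2.2⟩, ?_⟩⟩
  intro y hy
  have hsub : Set.range (· * y) ⊆ m := by
    rintro z ⟨w, rfl⟩; exact hm.prop.2.2 y hy w
  have : m ⊆ Set.range (· * y) := hm.2 (range_mul_mem_C y) hsub
  exact le_antisymm hsub this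

/-- A right translate of a minimal left ideal is a minimal left ideal. -/
lemma minLI_mul {L : Set (Ultrafilter S)} (hL : MinLI L) (x : Ultrafilter S) :
    MinLI ((· * x) '' L) := by
  obtain ⟨⟨⟨y₀, hy₀⟩, hLI⟩, hmin⟩ := hL
  refine ⟨⟨⟨y₀ * x, y₀, hy₀, rfl⟩, ?_⟩, ?_⟩
  · rintro w ⟨y, hy, rfl⟩ z
    exact ⟨z * y, hLI y hy z, by show z * y * x = z * (y * x); exact mul_assoc z y x⟩
  · rintro w ⟨y, hy, rfl⟩
    apply le_antisymm
    · rintro u ⟨z, rfl⟩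
      exact ⟨z * y, hLI y hy z, by show z * y * x = z * (y * x); exact mul_assoc z y x⟩
    · rintro u ⟨y', hy', rfl⟩
      have : y' ∈ Set.range (· * y) := (hmin y hy).symm ▸ hy'
      obtain ⟨z, rfl⟩ := this
      exact ⟨z, by show z * (y * x) = z * y * x; exact (mul_assoc z y x).symm⟩

end Aux

theorem omega_syndetic_of_mem_smallest_ideal {S : Type*} [Semigroup S]
    (K : Set (Ultrafilter S)) (hK : IsSmallestIdealBS K)
    (p : Ultrafilter S) (hp : p ∈ K) (A : Set S) (hA : A ∈ p) :
    SyndeticIn {s : S | {t : S | s * t ∈ A} ∈ p} := by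
  classical
  by_contra hB
  set B : Set S := {s : S | {t : S | s * t ∈ A} ∈ p} with hBdef
  rw [SyndeticIn] at hB
  push_neg at hB
  -- hB : ∀ F : Finset S, ∃ t, ∀ s ∈ F, s * t ∉ B
  -- Step 1: an ultrafilter q containing every {t | s * t ∉ B}
  obtain ⟨q, hq⟩ : ∃ q : Ultrafilter S, ∀ s : S, {t : S | s * t ∉ B} ∈ q := by
    have hfip : ∀ T : Finset (Set S),
        (↑T : Set (Set S)) ⊆ Set.range (fun s : S => {t | s * t ∉ B}) →
        (⋂₀ (↑T : Set (Set S))).Nonempty := by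
      intro T hT
      have hch : ∀ x ∈ T, ∃ s : S, {t | s * t ∉ B} = x := fun x hx => hT hx
      choose f hf using hch
      have hBT := hB (T.attach.image fun x => f x.1 x.2)
      obtain ⟨t, ht⟩ := hBT
      refine ⟨t, ?_⟩
      intro x hx
      rw [← hf x hx]
      exact ht _ (Finset.mem_image.2 ⟨⟨x, hx⟩, Finset.mem_attach _ _, rfl⟩)
    obtain ⟨q, hq⟩ := Ultrafilter.exists_ultrafilter_of_finite_inter_nonempty
      (Set.range fun s : S => {t | s * t ∉ B}) hfip
    exact ⟨q, fun s => hq ⟨s, rfl⟩⟩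
  -- Step 2: p lies in a minimal left ideal
  haveI : Nonempty S := ⟨(Ultrafilter.nonempty_of_mem hA).choose⟩
  set U : Set (Ultrafilter S) := {y | ∃ L, MinLI L ∧ y ∈ L} with hU
  have hUideal : IsIdealBS U := by
    constructor
    · obtain ⟨L, hL⟩ := (exists_minLI (S := S))
      obtain ⟨y, hy⟩ := hL.1.1
      exact ⟨y, L, hL, hy⟩
    · rintro y ⟨L, hL, hy⟩ x
      exact ⟨⟨L, hL, hL.1.2 y hy x⟩, ⟨(· * x) '' L, minLI_mul hL x, y, hy, rfl⟩⟩
  obtain ⟨L, hL, hpL⟩ := hK.2 U hUideal hp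
  -- Step 3: p = x * (q * p) for some x
  have hqp : q * p ∈ L := hL.1.2 p hpL q
  have : p ∈ Set.range (· * (q * p)) := (hL.2 (q * p) hqp).symm ▸ hpL
  obtain ⟨x, hx⟩ := this
  -- Step 4: contradiction
  rw [← hx, mem_ultra_mul] at hA
  obtain ⟨s, hs⟩ := Ultrafilter.nonempty_of_mem hA
  rw [Set.mem_setOf_eq, mem_ultra_mul] at hs
  -- hs : {u | {v | s * (u * v) ∈ A} ∈ p} ∈ q
  have hs' : {u : S | s * u ∈ B} ∈ q := by
    refine q.toFilter.mem_of_superset hs ?_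
    intro u hu
    simp only [Set.mem_setOf_eq] at hu ⊢
    rw [hBdef]
    simp only [Set.mem_setOf_eq]
    convert hu using 2
    ext v
    rw [mul_assoc]
  obtain ⟨u, hu1, hu2⟩ := Ultrafilter.nonempty_of_mem (q.toFilter.inter_mem hs' (hq s))
  exact hu2 hu1
end

section
/- Let S be a discrete semigroup, K the smallest ideal of βS, and p an ultrafilter on S. If for every A ∈ p the set Ω_p(A) = { s : s⁻¹A ∈ p } is syndetic, then p ∈ (βS)·q·p for every q ∈ βS; in particular p ∈ K. -/
attribute [local instance] Ultrafilter.mul Ultrafilter.semigroup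

private lemma mem_mul' {S : Type*} [Semigroup S] {A : Set S} {U V : Ultrafilter S} :
    A ∈ U * V ↔ {m | {m' | m * m' ∈ A} ∈ V} ∈ U :=
  Ultrafilter.eventually_mul U V (· ∈ A)

theorem mem_smallest_ideal_of_omega_syndetic {S : Type*} [Semigroup S]
    (K : Set (Ultrafilter S)) (hK : IsSmallestIdealBS K) (p : Ultrafilter S)
    (h : ∀ A : Set S, A ∈ p → SyndeticIn {s : S | {t : S | s * t ∈ A} ∈ p}) :
    (∀ q : Ultrafilter S, ∃ r : Ultrafilter S, r * q * p = p) ∧ p ∈ K := by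
  have main : ∀ q : Ultrafilter S, ∃ r : Ultrafilter S, r * q * p = p := by
    intro q
    -- D A = set of s with A ∈ (s) * q * p
    set D : Set S → Set S := fun A => {s | {u | {t | s * u * t ∈ A} ∈ p} ∈ q} with hD
    have hDne : ∀ A ∈ p, (D A).Nonempty := by
      intro A hA
      obtain ⟨F, hF⟩ := h A hA
      -- ⋃ s∈F, {u | {t | s*u*t ∈ A} ∈ p} = univ ∈ q
      have hcov : (⋃ s ∈ F, {u | {t | s * u * t ∈ A} ∈ p}) ∈ q := by
        have : (⋃ s ∈ F, {u : S | {t | s * u * t ∈ A} ∈ p}) = Set.univ := by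
          ext u
          simp only [Set.mem_iUnion, Set.mem_univ, iff_true]
          obtain ⟨s, hsF, hs⟩ := hF u
          exact ⟨s, hsF, by simpa [mul_assoc] using hs⟩
        rw [this]; exact Filter.univ_mem
      obtain ⟨s, hsF, hs⟩ := (Ultrafilter.finite_biUnion_mem_iff F.finite_toSet).mp hcov
      exact ⟨s, hs⟩
    have hDmono : ∀ A B : Set S, A ⊆ B → D A ⊆ D B := by
      intro A B hAB s hs
      refine Filter.mem_of_superset hs fun u hu => Filter.mem_of_superset hu fun t ht => hAB ht
    -- build the filter
    have hne : Filter.NeBot (⨅ A : p.sets, Filter.principal (D A)) := by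
      haveI : Nonempty p.sets := ⟨⟨Set.univ, Filter.univ_mem⟩⟩
      apply Filter.iInf_neBot_of_directed'
      · rintro ⟨A, hA⟩ ⟨B, hB⟩
        refine ⟨⟨A ∩ B, Filter.inter_mem hA hB⟩,
          Filter.principal_mono.mpr (hDmono _ _ Set.inter_subset_left),
          Filter.principal_mono.mpr (hDmono _ _ Set.inter_subset_right)⟩
      · rintro ⟨A, hA⟩
        exact Filter.principal_neBot_iff.mpr (hDne A hA)
    obtain ⟨r, hr⟩ := Ultrafilter.exists_le (⨅ A : p.sets, Filter.principal (D A))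
    refine ⟨r, ?_⟩
    have key : ∀ A ∈ p, A ∈ r * q * p := by
      intro A hA
      have hDr : D A ∈ r := by
        have : (⨅ A : p.sets, Filter.principal (D A)) ≤ Filter.principal (D A) :=
          iInf_le _ (⟨A, hA⟩ : p.sets)
        exact hr.trans this (Filter.mem_principal_self _)
      rw [mem_mul', mem_mul']
      refine Filter.mem_of_superset hDr fun s hs => ?_
      refine Filter.mem_of_superset hs fun u hu => ?_
      simpa [mul_assoc] using hu
    have : (↑(r * q * p) : Filter S) ≤ ↑p := fun A hA => key A hA
    exact (Ultrafilter.coe_le_coe.mp this)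
  refine ⟨main, ?_⟩
  obtain ⟨⟨⟨k, hk⟩, hideal⟩, _⟩ := hK
  obtain ⟨r, hr⟩ := main k
  have h1 : r * k ∈ K := (hideal k hk r).1
  have h2 : (r * k) * p ∈ K := (hideal (r * k) h1 p).2
  rw [hr] at h2
  exact h2
end

section
/- Let S be a discrete semigroup and K the smallest ideal of βS. If A ⊆ S and there exists p ∈ K with A ∈ p, then A is piecewise syndetic: there exists a finite F ⊆ S such that the family { s⁻¹(⋃_{t∈F} t⁻¹A) : s ∈ S } has the finite intersection property. -/
attribute [local instance] Ultrafilter.mul Ultrafilter.semigroup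

section Aux

variable {S : Type*} [Semigroup S]

lemma memMulIff (U V : Ultrafilter S) (s : Set S) :
    s ∈ U * V ↔ {m | {m' | m * m' ∈ s} ∈ V} ∈ U := Iff.rfl

/-- A nonempty closed left ideal of `βS`. -/
def IsCLI (L : Set (Ultrafilter S)) : Prop :=
  L.Nonempty ∧ IsClosed L ∧ ∀ x ∈ L, ∀ r : Ultrafilter S, r * x ∈ L

lemma isCLI_range_mul (x : Ultrafilter S) : IsCLI (Set.range (· * x)) := by
  refine ⟨⟨x * x, x, rfl⟩, ?_, ?_⟩
  · exact (isCompact_range (Ultrafilter.continuous_mul_left x)).isClosed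
  · rintro _ ⟨r', rfl⟩ r
    exact ⟨r * r', mul_assoc r r' x⟩

lemma exists_minimal_CLI (L0 : Set (Ultrafilter S)) (h : IsCLI L0) :
    ∃ L, L ⊆ L0 ∧ Minimal IsCLI L := by
  have H : ∀ c ⊆ {L : Set (Ultrafilter S) | IsCLI L}, IsChain (· ⊆ ·) c → c.Nonempty →
      ∃ lb ∈ {L : Set (Ultrafilter S) | IsCLI L}, ∀ s ∈ c, lb ⊆ s := by
    intro c hc hchain hcne
    refine ⟨⋂₀ c, ⟨?_, ?_, ?_⟩, fun s hs => Set.sInter_subset_of_mem hs⟩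
    · -- nonempty by compactness
      have : Nonempty c := hcne.to_subtype
      have hdir : Directed (· ⊇ ·) (fun i : c => (i : Set (Ultrafilter S))) := by
        rintro ⟨i, hi⟩ ⟨j, hj⟩
        rcases hchain.total hi hj with hij | hji
        · exact ⟨⟨i, hi⟩, le_refl _, hij⟩
        · exact ⟨⟨j, hj⟩, hji, le_refl _⟩
      have := IsCompact.nonempty_iInter_of_directed_nonempty_isCompact_isClosed
        (fun i : c => (i : Set (Ultrafilter S))) hdir
        (fun i => (hc i.2).1) (fun i => (hc i.2).2.1.isCompact) (fun i => (hc i.2).2.1)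
      rwa [Set.sInter_eq_iInter]
    · exact isClosed_sInter fun t ht => (hc ht).2.1
    · intro x hx r t ht
      exact (hc ht).2.2 x (hx t ht) r
  exact zorn_superset_nonempty _ H L0 h

lemma minimal_eq_range {L : Set (Ultrafilter S)} (hL : Minimal IsCLI L)
    {x : Ultrafilter S} (hx : x ∈ L) : Set.range (· * x) = L := by
  have hsub : Set.range (· * x) ⊆ L := by
    rintro _ ⟨r, rfl⟩; exact hL.1.2.2 x hx r
  exact hsub.antisymm (hL.2 (isCLI_range_mul x) hsub)

lemma minimal_mul {L : Set (Ultrafilter S)} (hL : Minimal IsCLI L) (q : Ultrafilter S) :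
    Minimal IsCLI ((· * q) '' L) := by
  constructor
  · refine ⟨hL.1.1.image _, ?_, ?_⟩
    · exact ((hL.1.2.1.isCompact).image (Ultrafilter.continuous_mul_left q)).isClosed
    · rintro _ ⟨x, hx, rfl⟩ r
      exact ⟨r * x, hL.1.2.2 x hx r, mul_assoc r x q⟩
  · rintro L' hL' hsub
    obtain ⟨y, hy⟩ := hL'.1
    obtain ⟨x, hx, rfl⟩ := hsub hy
    -- T = {z ∈ L | z * q ∈ L'} is a nonempty closed left ideal contained in L
    set T : Set (Ultrafilter S) := L ∩ (· * q) ⁻¹' L' with hT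
    have hTcli : IsCLI T := by
      refine ⟨⟨x, hx, hy⟩, ?_, ?_⟩
      · exact hL.1.2.1.inter (hL'.2.1.preimage (Ultrafilter.continuous_mul_left q))
      · rintro z ⟨hz1, hz2⟩ r
        refine ⟨hL.1.2.2 z hz1 r, ?_⟩
        show r * z * q ∈ L'
        rw [mul_assoc]
        exact hL'.2.2 _ hz2 r
    have hLT : L ⊆ T := hL.2 hTcli Set.inter_subset_left
    rintro _ ⟨z, hz, rfl⟩
    exact (hLT hz).2

lemma isIdeal_union_minimal (hne : Nonempty (Ultrafilter S)) :
    IsIdealBS {x : Ultrafilter S | ∃ L, Minimal IsCLI L ∧ x ∈ L} := by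
  constructor
  · obtain ⟨x⟩ := hne
    obtain ⟨L, _, hL⟩ := exists_minimal_CLI (Set.range (· * x)) (isCLI_range_mul x)
    obtain ⟨y, hy⟩ := hL.1.1
    exact ⟨y, L, hL, hy⟩
  · rintro p ⟨L, hL, hpL⟩ q
    constructor
    · exact ⟨L, hL, hL.1.2.2 p hpL q⟩
    · exact ⟨(· * q) '' L, minimal_mul hL q, ⟨p, hpL, rfl⟩⟩

end Aux

theorem piecewise_syndetic_of_mem_smallest_ideal {S : Type*} [Semigroup S]
    (K : Set (Ultrafilter S)) (hK : IsSmallestIdealBS K) (A : Set S)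
    (h : ∃ p ∈ K, A ∈ p) :
    PiecewiseSyndeticIn A := by
  obtain ⟨p, hpK, hAp⟩ := h
  -- p belongs to a minimal closed left ideal L
  have hKM := hK.2 _ (isIdeal_union_minimal ⟨p⟩)
  obtain ⟨L, hL, hpL⟩ := hKM hpK
  have hrange : Set.range (· * p) = L := minimal_eq_range hL hpL
  -- B is the set of s with s⁻¹A ∈ p
  set B : Set S := {s | {t | s * t ∈ A} ∈ p} with hB
  -- B is syndetic
  classical
  have hsynd : SyndeticIn B := by
    by_contra hns
    rw [SyndeticIn] at hns
    push_neg at hns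
    set g : S → Set S := fun s => {t | s * t ∉ B} with hg
    have hgen : (Filter.generate (Set.range g)).NeBot := by
      rw [Filter.generate_neBot_iff]
      intro t hts htf
      have hSne : Nonempty S := by
        obtain ⟨x, -⟩ := Ultrafilter.nonempty_of_mem (Filter.univ_mem (f := (p : Filter S)))
        exact ⟨x⟩
      have hch : ∀ c ∈ t, ∃ s : S, g s = c := fun c hc => hts hc
      choose! f hf using hch
      obtain ⟨t0, ht0⟩ := hns (htf.toFinset.image f)
      refine ⟨t0, fun c hc => ?_⟩
      rw [← hf c hc]
      exact ht0 (f c) (Finset.mem_image_of_mem f (htf.mem_toFinset.mpr hc))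
    set q : Ultrafilter S := @Ultrafilter.of _ (Filter.generate (Set.range g)) hgen with hq
    have hqg : ∀ s : S, g s ∈ q := fun s =>
      (Ultrafilter.of_le _) (Filter.mem_generate_of_mem ⟨s, rfl⟩)
    -- p = r * (q * p) for some r
    have hsub : Set.range (· * (q * p)) ⊆ Set.range (· * p) := by
      rintro _ ⟨r, rfl⟩
      exact ⟨r * q, show (r * q) * p = r * (q * p) from mul_assoc r q p⟩
    rw [hrange] at hsub
    have : L ⊆ Set.range (· * (q * p)) := hL.2 (isCLI_range_mul (q * p)) hsub
    obtain ⟨r, hr⟩ := this hpL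
    have hr' : r * (q * p) = p := hr
    -- A ∈ (r * q) * p, hence B ∈ r * q, hence some s⁻¹B ∈ q
    have hA : A ∈ (r * q) * p := by
      rw [mul_assoc, hr']; exact hAp
    rw [memMulIff] at hA
    have hBrq : B ∈ r * q := hA
    rw [memMulIff] at hBrq
    obtain ⟨s, hs⟩ := Ultrafilter.nonempty_of_mem hBrq
    have hs' : {m' | s * m' ∈ B} ∈ q := hs
    have : g s ∈ q := hqg s
    have : ({m' | s * m' ∈ B} ∩ g s) ∈ q := Filter.inter_mem hs' this
    obtain ⟨t0, ht1, ht2⟩ := Ultrafilter.nonempty_of_mem this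
    exact ht2 ht1
  -- finish: syndeticity of B gives piecewise syndeticity of A
  obtain ⟨F, hF⟩ := hsynd
  refine ⟨F, fun G => ?_⟩
  choose u hu1 hu2 using hF
  have hW : (⋂ s ∈ G, {t | (u s * s) * t ∈ A}) ∈ p := by
    refine (Filter.biInter_mem G.finite_toSet).mpr fun s _ => ?_
    exact hu2 s
  obtain ⟨t, ht⟩ := Ultrafilter.nonempty_of_mem hW
  refine ⟨t, ?_⟩
  simp only [Set.mem_iInter, Set.mem_setOf_eq] at ht ⊢
  intro s hs
  refine ⟨u s, hu1 s, ?_⟩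
  rw [← mul_assoc]
  exact ht s hs
end

section
/- Let S be a discrete semigroup and K the smallest ideal of βS. If A ⊆ S is piecewise syndetic, then the closure of { p ∈ βS : A ∈ p } meets K; equivalently, there exists p ∈ K with A ∈ p. -/
attribute [local instance] Ultrafilter.mul Ultrafilter.semigroup

theorem smallest_ideal_meets_of_piecewise_syndetic {S : Type*} [Semigroup S]
    (K : Set (Ultrafilter S)) (hK : IsSmallestIdealBS K) (A : Set S)
    (h : PiecewiseSyndeticIn A) :
    ∃ p ∈ K, A ∈ p := by
  classical
  obtain ⟨F, hF⟩ := h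
  set T : S → Set S := fun s => {t : S | ∃ u ∈ F, u * (s * t) ∈ A} with hT
  -- the generated filter is nonbot
  have hne : (Filter.generate (Set.range T)).NeBot := by
    rw [Filter.generate_neBot_iff]
    intro t hts htf
    -- choose representatives
    have : ∀ x ∈ t, ∃ s : S, T s = x := by
      intro x hx
      obtain ⟨s, hs⟩ := hts hx
      exact ⟨s, hs⟩
    choose g hg using this
    have := htf
    lift t to Finset (Set S) using htf
    set G : Finset S := t.attach.image (fun x => g x.1 x.2) with hG
    obtain ⟨w, hw⟩ := hF G
    refine ⟨w, ?_⟩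
    intro x hx
    have hxT : T (g x hx) = x := hg x hx
    have hmem : g x hx ∈ G := Finset.mem_image.mpr ⟨⟨x, hx⟩, Finset.mem_attach _ _, rfl⟩
    have := Set.mem_iInter₂.mp hw (g x hx) hmem
    exact hxT ▸ this
  haveI := hne
  set q : Ultrafilter S := Ultrafilter.of (Filter.generate (Set.range T)) with hq
  have hq' : ∀ s : S, T s ∈ q := by
    intro s
    exact Ultrafilter.of_le _ (Filter.mem_generate_of_mem ⟨s, rfl⟩)
  obtain ⟨⟨⟨p0, hp0⟩, hideal⟩, _⟩ := hK
  set r : Ultrafilter S := p0 * q with hr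
  have hrK : r ∈ K := ((hideal p0 hp0 q).2)
  -- B := union of translates
  have hB : (⋃ u ∈ F, {t : S | u * t ∈ A}) ∈ r := by
    have : ∀ᶠ m in (p0 : Filter S), ∀ᶠ n in (q : Filter S),
        (m * n) ∈ ⋃ u ∈ F, {t : S | u * t ∈ A} := by
      refine Filter.Eventually.of_forall (fun m => ?_)
      have := hq' m
      refine Filter.mem_of_superset this ?_
      intro n hn
      obtain ⟨u, huF, hu⟩ := hn
      exact Set.mem_biUnion huF (by simpa [mul_assoc] using hu)
    exact (Ultrafilter.eventually_mul p0 q _).mpr this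
  have hfin : ∃ u ∈ F, {t : S | u * t ∈ A} ∈ r := by
    have := (Ultrafilter.finite_biUnion_mem_iff (F.finite_toSet)).mp hB
    simpa using this
  obtain ⟨u, huF, hur⟩ := hfin
  refine ⟨(pure u : Ultrafilter S) * r, (hideal r hrK (pure u)).1, ?_⟩
  have : ∀ᶠ m in ((pure u : Ultrafilter S) : Filter S), ∀ᶠ n in (r : Filter S),
      m * n ∈ A := by
    simp only [Ultrafilter.coe_pure, Filter.eventually_pure]
    exact hur
  exact (Ultrafilter.eventually_mul (pure u) r _).mpr this
end

section
/- Let S be a discrete semigroup. An ultrafilter p on S belongs to the closure of the smallest ideal K of βS if and only if every A ∈ p is piecewise syndetic. -/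
attribute [local instance] Ultrafilter.mul Ultrafilter.semigroup

section Aux

variable {S : Type*} [Semigroup S]

lemma memMulAux {A : Set S} {p q : Ultrafilter S} :
    A ∈ p * q ↔ {s : S | {t : S | s * t ∈ A} ∈ q} ∈ p :=
  Iff.rfl

lemma memPureMulAux {A : Set S} {u : S} {m : Ultrafilter S} :
    A ∈ (pure u : Ultrafilter S) * m ↔ {t : S | u * t ∈ A} ∈ m := by
  rw [memMulAux]; exact Ultrafilter.mem_pure

lemma memClosureAux {K : Set (Ultrafilter S)} {p : Ultrafilter S} :
    p ∈ closure K ↔ ∀ A ∈ p, ∃ q ∈ K, A ∈ q := by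
  rw [ultrafilterBasis_is_basis.mem_closure_iff]
  constructor
  · intro h A hA
    obtain ⟨q, hq1, hq2⟩ := h {u | A ∈ u} ⟨A, rfl⟩ hA
    exact ⟨q, hq2, hq1⟩
  · rintro h o ⟨A, rfl⟩ hp
    obtain ⟨q, hqK, hqA⟩ := h A hp
    exact ⟨q, hqA, hqK⟩

/-- If `{s | s⁻¹A ∈ y}` is piecewise syndetic, so is `A`. -/
lemma pwsOfPreimageAux (y : Ultrafilter S) (A : Set S)
    (h : PiecewiseSyndeticIn {s : S | {t : S | s * t ∈ A} ∈ y}) :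
    PiecewiseSyndeticIn A := by
  classical
  obtain ⟨F, hF⟩ := h
  refine ⟨F, fun G => ?_⟩
  obtain ⟨t, ht⟩ := hF G
  have key : ∀ v : S, v ∈ G → ∃ u' ∈ F, {w : S | u' * (v * t) * w ∈ A} ∈ y := by
    intro v hv
    obtain ⟨u', hu'F, hu'⟩ := Set.mem_iInter₂.1 ht v hv
    exact ⟨u', hu'F, hu'⟩
  choose u huF hys using key
  let U : S → S := fun v => if h : v ∈ G then u v h else t
  have hy : (⋂ v ∈ G, {w : S | U v * (v * t) * w ∈ A}) ∈ y := by
    rw [← Ultrafilter.mem_coe, Filter.biInter_finset_mem]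
    intro v hv
    simpa only [U, dif_pos hv, Ultrafilter.mem_coe] using hys v hv
  obtain ⟨w, hw⟩ := Ultrafilter.nonempty_of_mem hy
  refine ⟨t * w, Set.mem_iInter₂.2 fun v hv => ?_⟩
  refine ⟨u v hv, huF v hv, ?_⟩
  have hw' := Set.mem_iInter₂.1 hw v hv
  simp only [U, dif_pos hv, Set.mem_setOf_eq] at hw'
  have : u v hv * (v * (t * w)) = u v hv * (v * t) * w := by
    rw [mul_assoc, mul_assoc]
  rwa [this]

/-- Every member of a point of the smallest ideal is piecewise syndetic. -/
lemma pwsOfMemKAux {K : Set (Ultrafilter S)} (hK : IsSmallestIdealBS K)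
    {q : Ultrafilter S} (hq : q ∈ K) {A : Set S} (hA : A ∈ q) :
    PiecewiseSyndeticIn A := by
  classical
  -- the collection of nonempty closed left ideals
  set 𝒮 : Set (Set (Ultrafilter S)) :=
    {C | C.Nonempty ∧ IsClosed C ∧ ∀ x : Ultrafilter S, ∀ c ∈ C, x * c ∈ C} with h𝒮
  have hL₀ : Set.range (· * q) ∈ 𝒮 := by
    refine ⟨⟨q * q, q, rfl⟩, (isCompact_range (Ultrafilter.continuous_mul_left q)).isClosed, ?_⟩
    rintro x _ ⟨z, rfl⟩
    exact ⟨x * z, mul_assoc x z q⟩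
  -- Zorn's lemma: a minimal nonempty closed left ideal exists
  obtain ⟨L, -, hLmem, hLmin⟩ : ∃ L, L ⊆ Set.range (· * q) ∧ Minimal (· ∈ 𝒮) L := by
    refine zorn_superset_nonempty 𝒮 ?_ _ hL₀
    intro c hc𝒮 hchain hcne
    refine ⟨⋂₀ c, ⟨?_, isClosed_sInter fun C hC => (hc𝒮 hC).2.1, ?_⟩,
      fun s hs => Set.sInter_subset_of_mem hs⟩
    · haveI : Nonempty c := hcne.to_subtype
      refine IsCompact.nonempty_sInter_of_directed_nonempty_isCompact_isClosed ?_
        (fun C hC => (hc𝒮 hC).1) (fun C hC => (hc𝒮 hC).2.1.isCompact)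
        (fun C hC => (hc𝒮 hC).2.1)
      intro C hC D hD
      rcases hchain.total hC hD with h | h
      · exact ⟨C, hC, subset_rfl, h⟩
      · exact ⟨D, hD, h, subset_rfl⟩
    · intro x m hm
      exact Set.mem_sInter.2 fun C hC => (hc𝒮 hC).2.2 x m (Set.mem_sInter.1 hm C hC)
  obtain ⟨⟨l₀, hl₀⟩, hLclosed, hLabs⟩ := hLmem
  -- L = βS * m for every m ∈ L
  have hLeq : ∀ m ∈ L, Set.range (· * m) = L := by
    intro m hm
    have hsub : Set.range (· * m) ⊆ L := by rintro _ ⟨z, rfl⟩; exact hLabs z m hm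
    have hmem : Set.range (· * m) ∈ 𝒮 := by
      refine ⟨⟨m * m, m, rfl⟩, (isCompact_range (Ultrafilter.continuous_mul_left m)).isClosed, ?_⟩
      rintro x _ ⟨z, rfl⟩
      exact ⟨x * z, mul_assoc x z m⟩
    exact hsub.antisymm (hLmin hmem hsub)
  -- core claim : every member of every point of L is piecewise syndetic
  have claim : ∀ l ∈ L, ∀ B ∈ l, PiecewiseSyndeticIn B := by
    intro l hl B hB
    obtain ⟨t₀⟩ : Nonempty S := ⟨(Ultrafilter.nonempty_of_mem hB).choose⟩
    have step1 : ∀ x : Ultrafilter S, ∃ s : S, {t : S | s * t ∈ B} ∈ x * l := by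
      intro x
      have hxl : x * l ∈ L := hLabs x l hl
      have : l ∈ Set.range (· * (x * l)) := (hLeq (x * l) hxl).symm ▸ hl
      obtain ⟨y, hy⟩ := this
      have hy' : y * (x * l) = l := hy
      have hBy : B ∈ y * (x * l) := by rw [hy']; exact hB
      obtain ⟨s, hs⟩ := Ultrafilter.nonempty_of_mem (memMulAux.1 hBy)
      exact ⟨s, hs⟩
    -- compactness: finitely many s suffice
    have hcover : (Set.univ : Set (Ultrafilter S)) ⊆
        ⋃ s : S, (· * l) ⁻¹' {z : Ultrafilter S | {t : S | s * t ∈ B} ∈ z} := by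
      intro x _
      obtain ⟨s, hs⟩ := step1 x
      exact Set.mem_iUnion.2 ⟨s, hs⟩
    obtain ⟨F, hF⟩ := isCompact_univ.elim_finite_subcover _
      (fun s => (ultrafilter_isOpen_basic {t : S | s * t ∈ B}).preimage
        (Ultrafilter.continuous_mul_left l)) hcover
    refine ⟨F, fun G => ?_⟩
    have key : ∀ v : S, v ∈ G → ∃ u ∈ F, {t : S | u * (v * t) ∈ B} ∈ l := by
      intro v hv
      have := hF (Set.mem_univ (pure v : Ultrafilter S))
      obtain ⟨u, huF, hu⟩ := Set.mem_iUnion₂.1 this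
      refine ⟨u, huF, ?_⟩
      have : {t : S | u * t ∈ B} ∈ (pure v : Ultrafilter S) * l := hu
      rw [memPureMulAux] at this
      exact this
    choose u huF hls using key
    let U : S → S := fun v => if h : v ∈ G then u v h else t₀
    have hlm : (⋂ v ∈ G, {t : S | U v * (v * t) ∈ B}) ∈ l := by
      rw [← Ultrafilter.mem_coe, Filter.biInter_finset_mem]
      intro v hv
      simpa only [U, dif_pos hv, Ultrafilter.mem_coe] using hls v hv
    obtain ⟨t, htm⟩ := Ultrafilter.nonempty_of_mem hlm
    refine ⟨t, Set.mem_iInter₂.2 fun v hv => ?_⟩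
    have := Set.mem_iInter₂.1 htm v hv
    simp only [U, dif_pos hv, Set.mem_setOf_eq] at this
    exact ⟨u v hv, huF v hv, this⟩
  -- the two-sided ideal generated by L
  set I : Set (Ultrafilter S) :=
    L ∪ {z | ∃ l ∈ L, ∃ y : Ultrafilter S, z = l * y} with hI
  have hIideal : IsIdealBS I := by
    refine ⟨⟨l₀, Or.inl hl₀⟩, ?_⟩
    rintro p (hp | ⟨l, hl, y, rfl⟩) r
    · exact ⟨Or.inl (hLabs r p hp), Or.inr ⟨p, hp, r, rfl⟩⟩
    · constructor
      · refine Or.inr ⟨r * l, hLabs r l hl, y, ?_⟩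
        rw [mul_assoc]
      · refine Or.inr ⟨l, hl, y * r, ?_⟩
        rw [mul_assoc]
  have hqI : q ∈ I := hK.2 I hIideal hq
  rcases hqI with hq' | ⟨l, hl, y, rfl⟩
  · exact claim q hq' A hA
  · have : {s : S | {t : S | s * t ∈ A} ∈ y} ∈ l := memMulAux.1 hA
    exact pwsOfPreimageAux y A (claim l hl _ this)

end Aux

theorem mem_closure_smallest_ideal_iff {S : Type*} [Semigroup S]
    (K : Set (Ultrafilter S)) (hK : IsSmallestIdealBS K) (p : Ultrafilter S) :
    p ∈ closure K ↔ ∀ A : Set S, A ∈ p → PiecewiseSyndeticIn A := by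
  classical
  rw [memClosureAux]
  constructor
  · intro h A hA
    obtain ⟨q, hqK, hqA⟩ := h A hA
    exact pwsOfMemKAux hK hqK hqA
  · intro h A hA
    obtain ⟨F, hF⟩ := h A hA
    obtain ⟨p₀, hp₀⟩ := hK.1.1
    set C : S → Set S := fun s => {t : S | ∃ u ∈ F, u * (s * t) ∈ A} with hC
    -- build an ultrafilter containing all the `C s`
    have hsub : ∀ t : Set (Set S), t.Finite → t ⊆ Set.range C →
        ∃ G : Finset S, (⋂ s ∈ G, C s) ⊆ ⋂₀ t := by
      intro t htf
      refine Set.Finite.induction_on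
        (motive := fun t _ => t ⊆ Set.range C → ∃ G : Finset S, (⋂ s ∈ G, C s) ⊆ ⋂₀ t)
        t htf ?_ ?_
      · intro _; exact ⟨∅, by simp⟩
      · intro a s _ _ ih hsub'
        obtain ⟨G, hG⟩ := ih fun x hx => hsub' (Set.mem_insert_of_mem a hx)
        obtain ⟨v, hv⟩ := hsub' (Set.mem_insert a s)
        refine ⟨insert v G, ?_⟩
        rw [Set.sInter_insert]
        intro x hx
        have hxv : x ∈ C v := Set.mem_iInter₂.1 hx v (Finset.mem_insert_self v G)
        have hxG : x ∈ ⋂ s ∈ G, C s :=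
          Set.mem_iInter₂.2 fun s' hs' => Set.mem_iInter₂.1 hx s' (Finset.mem_insert_of_mem hs')
        exact ⟨hv ▸ hxv, hG hxG⟩
    have hne : (Filter.generate (Set.range C)).NeBot := by
      rw [Filter.generate_neBot_iff]
      intro t hts htf
      obtain ⟨G, hG⟩ := hsub t htf hts
      exact (hF G).mono hG
    haveI := hne
    set r : Ultrafilter S := Ultrafilter.of (Filter.generate (Set.range C)) with hr
    have hrC : ∀ s : S, C s ∈ r := fun s =>
      Filter.le_def.mp (Ultrafilter.of_le _) _ (Filter.mem_generate_of_mem ⟨s, rfl⟩)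
    have hmK : p₀ * r ∈ K := (hK.1.2 p₀ hp₀ r).2
    have hD : {t : S | ∃ u ∈ F, u * t ∈ A} ∈ p₀ * r := by
      rw [memMulAux]
      refine Filter.univ_mem' fun s => ?_
      refine Filter.mem_of_superset (hrC s) fun t ht => ?_
      obtain ⟨u, huF, hu⟩ := ht
      exact ⟨u, huF, hu⟩
    have hDeq : {t : S | ∃ u ∈ F, u * t ∈ A} = ⋃ u ∈ (F : Set S), {t : S | u * t ∈ A} := by
      ext t; simp
    rw [hDeq] at hD
    obtain ⟨u, huF, hu⟩ := (Ultrafilter.finite_biUnion_mem_iff F.finite_toSet).1 hD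
    refine ⟨(pure u : Ultrafilter S) * (p₀ * r), (hK.1.2 _ hmK (pure u)).1, ?_⟩
    rw [memPureMulAux]
    exact hu
end

section
/- Let S be a discrete semigroup and A ⊆ S. If there exists p in the smallest ideal K of βS with A ∈ p, then the set C = { s ∈ S : s⁻¹A is central } is syndetic, where B ⊆ S is central if B ∈ e for some idempotent e ∈ K. -/
attribute [local instance] Ultrafilter.mul Ultrafilter.semigroup

theorem central_translates_syndetic {S : Type*} [Semigroup S]
    (K : Set (Ultrafilter S)) (hK : IsSmallestIdealBS K) (A : Set S)
    (h : ∃ p ∈ K, A ∈ p) :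
    SyndeticIn {s : S | ∃ e : Ultrafilter S, e ∈ K ∧ e * e = e ∧ {t : S | s * t ∈ A} ∈ e} := by
  classical
  obtain ⟨p, hpK, hpA⟩ := h
  set C : Set S := {s : S | ∃ e : Ultrafilter S, e ∈ K ∧ e * e = e ∧ {t : S | s * t ∈ A} ∈ e}
    with hC
  -- left ideals of the form βS * x
  set I : Ultrafilter S → Set (Ultrafilter S) := fun x => Set.range (· * x) with hI
  have hIc : ∀ x, IsCompact (I x) := fun x =>
    isCompact_range (Ultrafilter.continuous_mul_left x)
  have hIne : ∀ x, (I x).Nonempty := fun x => ⟨p * x, p, rfl⟩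
  have hsub : ∀ x y, y ∈ I x → I y ⊆ I x := by
    rintro x y ⟨r, rfl⟩ w ⟨s, rfl⟩
    exact ⟨s * r, (mul_assoc s r x)⟩
  -- Zorn: a minimal left ideal of the form `I x₀`
  obtain ⟨m, ⟨x₀, rfl⟩, hmin⟩ : ∃ m ∈ Set.range I, ∀ a ∈ Set.range I, a ⊆ m → a = m := by
    have := zorn_superset (Set.range I) ?_
    · obtain ⟨m, hm⟩ := this
      exact ⟨m, hm.prop, fun a ha hsub' => hm.eq_of_subset ha hsub'⟩
    intro c hc hchain
    rcases c.eq_empty_or_nonempty with rfl | ⟨m₀, hm₀⟩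
    · exact ⟨I p, ⟨p, rfl⟩, by simp⟩
    · haveI : Nonempty c := ⟨⟨m₀, hm₀⟩⟩
      have hne : (⋂₀ c).Nonempty := by
        apply IsCompact.nonempty_sInter_of_directed_nonempty_isCompact_isClosed
        · intro a ha b hb
          rcases hchain.total ha hb with h | h
          · exact ⟨a, ha, subset_rfl, h⟩
          · exact ⟨b, hb, h, subset_rfl⟩
        · intro U hU; obtain ⟨x, rfl⟩ := hc hU; exact hIne x
        · intro U hU; obtain ⟨x, rfl⟩ := hc hU; exact hIc x
        · intro U hU; obtain ⟨x, rfl⟩ := hc hU; exact (hIc x).isClosed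
      obtain ⟨y, hy⟩ := hne
      refine ⟨I y, ⟨y, rfl⟩, fun s hs => ?_⟩
      obtain ⟨x, rfl⟩ := hc hs
      exact hsub x y (hy _ hs)
  have hmin' : ∀ y ∈ I x₀, I y = I x₀ := fun y hy =>
    hmin (I y) ⟨y, rfl⟩ (hsub _ _ hy)
  -- transfer minimality to right translates
  have htrans : ∀ a : Ultrafilter S, ∀ y ∈ I (x₀ * a), I y = I (x₀ * a) := by
    rintro a y ⟨r, rfl⟩
    apply Set.Subset.antisymm (hsub _ _ ⟨r, rfl⟩)
    rintro w ⟨s, rfl⟩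
    have : s * x₀ ∈ I (r * x₀) := (hmin' (r * x₀) ⟨r, rfl⟩).symm ▸ ⟨s, rfl⟩
    obtain ⟨t, ht⟩ := this
    refine ⟨t, ?_⟩
    show t * (r * (x₀ * a)) = s * (x₀ * a)
    have ht' : t * (r * x₀) = s * x₀ := ht
    calc t * (r * (x₀ * a)) = (t * (r * x₀)) * a := by rw [mul_assoc t (r * x₀) a, mul_assoc r x₀ a]
      _ = (s * x₀) * a := by rw [ht']
      _ = s * (x₀ * a) := mul_assoc s x₀ a
  -- the two-sided ideal generated by `I x₀`
  set J : Set (Ultrafilter S) := I x₀ ∪ ⋃ a : Ultrafilter S, I (x₀ * a) with hJdef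
  have hJ : IsIdealBS J := by
    refine ⟨⟨p * x₀, Or.inl ⟨p, rfl⟩⟩, ?_⟩
    rintro p' (⟨r, rfl⟩ | hp') q
    · constructor
      · exact Or.inl ⟨q * r, mul_assoc q r x₀⟩
      · exact Or.inr (Set.mem_iUnion.mpr ⟨q, ⟨r, (mul_assoc r x₀ q).symm⟩⟩)
    · obtain ⟨T, ⟨a, rfl⟩, r, rfl⟩ := hp'
      constructor
      · exact Or.inr (Set.mem_iUnion.mpr ⟨a, ⟨q * r, mul_assoc q r (x₀ * a)⟩⟩)
      · refine Or.inr (Set.mem_iUnion.mpr ⟨a * q, ⟨r, ?_⟩⟩)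
        show r * (x₀ * (a * q)) = (r * (x₀ * a)) * q
        rw [mul_assoc, mul_assoc]
  have hpJ : p ∈ J := hK.2 J hJ hpK
  -- p lies in a minimal left ideal I z
  obtain ⟨z, hpz, hz⟩ : ∃ z : Ultrafilter S, p ∈ I z ∧ ∀ y ∈ I z, I y = I z := by
    rcases hpJ with hp | hp
    · exact ⟨x₀, hp, hmin'⟩
    · obtain ⟨T, ⟨a, rfl⟩, hp⟩ := hp
      exact ⟨x₀ * a, hp, htrans a⟩
  have hIpz : I p = I z := hz p hpz
  have hIpK : I p ⊆ K := by rintro w ⟨r, rfl⟩; exact ((hK.1).2 p hpK r).1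
  -- idempotent in I p
  obtain ⟨e, heIp, heidem⟩ : ∃ e ∈ I p, e * e = e := by
    apply exists_idempotent_in_compact_subsemigroup Ultrafilter.continuous_mul_left
      (I p) (hIne p) (hIc p)
    rintro x hx y ⟨r, rfl⟩
    exact ⟨x * r, mul_assoc x r p⟩
  have heK : e ∈ K := hIpK heIp
  have hIez : I e = I z := hz e (hIpz ▸ heIp)
  -- key step: every ultrafilter q contains a translate of C
  have key : ∀ q : Ultrafilter S, ∃ s : S, {t : S | s * t ∈ C} ∈ q := by
    intro q
    have hqe : q * e ∈ I z := hIez ▸ ⟨q, rfl⟩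
    have : p ∈ I (q * e) := (hz (q * e) hqe).symm ▸ hpz
    obtain ⟨r, hr⟩ := this
    -- p = (r * q) * e
    have hp_eq : p = (r * q) * e := by rw [← hr, mul_assoc]
    have hA : ∀ᶠ n in ↑((r * q) * e), n ∈ A := by
      rw [← hp_eq]; exact hpA
    rw [Ultrafilter.eventually_mul, Ultrafilter.eventually_mul] at hA
    obtain ⟨s₁, hs₁⟩ := Ultrafilter.nonempty_of_mem (Filter.eventually_iff.mp hA)
    refine ⟨s₁, ?_⟩
    have hs₁' : ∀ᶠ m2 in ↑q, ∀ᶠ m' in ↑e, s₁ * m2 * m' ∈ A := hs₁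
    apply Filter.mem_of_superset (Filter.eventually_iff.mp hs₁')
    intro m2 hm2
    exact ⟨e, heK, heidem, hm2⟩
  -- conclude syndeticity
  by_contra hsyn
  rw [SyndeticIn] at hsyn
  push_neg at hsyn
  have hSne : Nonempty S := Filter.nonempty_of_neBot (p : Filter S)
  set 𝒮 : Set (Set S) := {T | ∃ s : S, T = {t : S | s * t ∉ C}} with h𝒮
  have hfin : ∀ T : Finset (Set S), (↑T : Set (Set S)) ⊆ 𝒮 → (⋂₀ (↑T : Set (Set S))).Nonempty := by
    intro T hT
    have hch : ∀ B ∈ T, ∃ s : S, B = {t : S | s * t ∉ C} := fun B hB => hT hB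
    set f : Set S → S := fun B => if hB : ∃ s : S, B = {t : S | s * t ∉ C}
      then hB.choose else hSne.some with hf
    obtain ⟨t, ht⟩ := hsyn (T.image f)
    refine ⟨t, ?_⟩
    rintro B hB
    have hBT : B ∈ T := Finset.mem_coe.mp hB
    have hex := hch B hBT
    have : f B = hex.choose := by simp [hf, dif_pos hex]
    have hBf : B = {t : S | f B * t ∉ C} := by rw [this]; exact hex.choose_spec
    have : f B * t ∉ C := ht (f B) (Finset.mem_image_of_mem f hBT)
    rw [hBf]; exact this
  obtain ⟨U, hU⟩ := Ultrafilter.exists_ultrafilter_of_finite_inter_nonempty 𝒮 hfin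
  obtain ⟨s, hs⟩ := key U
  have h1 : {t : S | s * t ∉ C} ∈ U := hU ⟨s, rfl⟩
  have h2 : {t : S | s * t ∉ C} = {t : S | s * t ∈ C}ᶜ := rfl
  rw [h2, Ultrafilter.compl_mem_iff_notMem] at h1
  exact h1 hs
end

section
/- Let S be a discrete semigroup, p an ultrafilter on S belonging to the smallest ideal K of βS, and A ∈ p. Then there exist s ∈ S and an idempotent e ∈ K with s⁻¹A ∈ e; i.e., some translate s⁻¹A of A is central. -/
attribute [local instance] Ultrafilter.mul Ultrafilter.semigroup

section Aux

variable {S : Type*} [Semigroup S]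

/-- `L` is a (nonempty) left ideal of `βS`. -/
def LeftIdealBS (L : Set (Ultrafilter S)) : Prop :=
  L.Nonempty ∧ ∀ p ∈ L, ∀ q : Ultrafilter S, q * p ∈ L

/-- `L` is a minimal left ideal of `βS`. -/
def MinLeftIdealBS (L : Set (Ultrafilter S)) : Prop :=
  LeftIdealBS L ∧ ∀ J : Set (Ultrafilter S), LeftIdealBS J → J ⊆ L → J = L

/-- The left ideal `βS * x`. -/
def orbBS (x : Ultrafilter S) : Set (Ultrafilter S) :=
  Set.range (fun q : Ultrafilter S => q * x)

lemma orbBS_leftIdeal (x : Ultrafilter S) : LeftIdealBS (orbBS x) := by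
  refine ⟨⟨x * x, x, rfl⟩, ?_⟩
  rintro p ⟨r, rfl⟩ q
  exact ⟨q * r, mul_assoc q r x⟩

lemma orbBS_isCompact (x : Ultrafilter S) : IsCompact (orbBS x) :=
  isCompact_range (Ultrafilter.continuous_mul_left x)

lemma orbBS_isClosed (x : Ultrafilter S) : IsClosed (orbBS x) :=
  (orbBS_isCompact x).isClosed

lemma orbBS_subset {L : Set (Ultrafilter S)} (hL : LeftIdealBS L) {x : Ultrafilter S}
    (hx : x ∈ L) : orbBS x ⊆ L := by
  rintro p ⟨q, rfl⟩
  exact hL.2 x hx q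

/-- Every `orbBS x` contains a minimal left ideal. -/
lemma exists_minLeftIdeal (x : Ultrafilter S) :
    ∃ L : Set (Ultrafilter S), MinLeftIdealBS L ∧ L ⊆ orbBS x := by
  set 𝒮 : Set (Set (Ultrafilter S)) :=
    {J | J ⊆ orbBS x ∧ IsClosed J ∧ LeftIdealBS J} with h𝒮
  have hzorn : ∀ c ⊆ 𝒮, IsChain (· ⊆ ·) c → c.Nonempty →
      ∃ lb ∈ 𝒮, ∀ s ∈ c, lb ⊆ s := by
    intro c hc hchain hcne
    refine ⟨⋂₀ c, ⟨?_, ?_, ?_, ?_⟩, fun s hs => Set.sInter_subset_of_mem hs⟩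
    · obtain ⟨t, ht⟩ := hcne
      exact (Set.sInter_subset_of_mem ht).trans (hc ht).1
    · exact isClosed_sInter fun t ht => (hc ht).2.1
    · -- nonempty: compactness argument
      haveI : Nonempty c := hcne.to_subtype
      have : (⋂ t : c, (t : Set (Ultrafilter S))).Nonempty := by
        apply IsCompact.nonempty_iInter_of_directed_nonempty_isCompact_isClosed
        · intro i j
          rcases hchain.total i.2 j.2 with h | h
          · exact ⟨i, le_rfl, h⟩
          · exact ⟨j, h, le_rfl⟩
        · exact fun i => (hc i.2).2.2.1
        · exact fun i => (hc i.2).2.1.isCompact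
        · exact fun i => (hc i.2).2.1
      rwa [Set.sInter_eq_iInter]
    · intro p hp q
      exact Set.mem_sInter.2 fun t ht => (hc ht).2.2.2 p (Set.mem_sInter.1 hp t ht) q
  obtain ⟨m, hmsub, hmin⟩ := zorn_superset_nonempty 𝒮 hzorn (orbBS x)
      ⟨le_rfl, orbBS_isClosed x, orbBS_leftIdeal x⟩
  obtain ⟨hm1, hm2, hm3⟩ := hmin.prop
  refine ⟨m, ⟨hm3, ?_⟩, hm1⟩
  intro J hJ hJm
  obtain ⟨y, hy⟩ := hJ.1
  have horb : orbBS y ∈ 𝒮 :=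
    ⟨(orbBS_subset hJ hy).trans (hJm.trans hm1), orbBS_isClosed y, orbBS_leftIdeal y⟩
  have h1 : orbBS y ⊆ m := (orbBS_subset hJ hy).trans hJm
  have h2 : m ⊆ orbBS y := hmin.2 horb h1
  exact le_antisymm hJm (h2.trans (orbBS_subset hJ hy))

/-- A right translate of a minimal left ideal is a minimal left ideal. -/
lemma minLeftIdeal_mul {L : Set (Ultrafilter S)} (hL : MinLeftIdealBS L) (q : Ultrafilter S) :
    MinLeftIdealBS ((fun x => x * q) '' L) := by
  constructor
  · refine ⟨hL.1.1.image _, ?_⟩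
    rintro r ⟨x, hx, rfl⟩ w
    exact ⟨w * x, hL.1.2 x hx w, mul_assoc w x q⟩
  · intro T hT hTsub
    have hL' : LeftIdealBS {x ∈ L | x * q ∈ T} := by
      constructor
      · obtain ⟨t, ht⟩ := hT.1
        obtain ⟨x, hx, rfl⟩ := hTsub ht
        exact ⟨x, hx, ht⟩
      · rintro x ⟨hx1, hx2⟩ w
        refine ⟨hL.1.2 x hx1 w, ?_⟩
        have h := hT.2 (x * q) hx2 w
        rwa [← mul_assoc] at h
    have hsep := hL.2 _ hL' (Set.sep_subset _ _)
    refine le_antisymm hTsub ?_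
    rintro r ⟨x, hx, rfl⟩
    rw [← hsep] at hx
    exact hx.2

end Aux

theorem exists_central_translate {S : Type*} [Semigroup S]
    (K : Set (Ultrafilter S)) (hK : IsSmallestIdealBS K)
    (p : Ultrafilter S) (hp : p ∈ K) (A : Set S) (hA : A ∈ p) :
    ∃ s : S, ∃ e : Ultrafilter S, e ∈ K ∧ e * e = e ∧ {t : S | s * t ∈ A} ∈ e := by
  obtain ⟨hKideal, hKmin⟩ := hK
  set U : Set (Ultrafilter S) := {q | ∃ L, MinLeftIdealBS L ∧ q ∈ L} with hUdef
  have hU : IsIdealBS U := by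
    refine ⟨?_, ?_⟩
    · obtain ⟨L, hL, hsub⟩ := exists_minLeftIdeal p
      obtain ⟨x, hx⟩ := hL.1.1
      exact ⟨x, L, hL, hx⟩
    · rintro r ⟨L, hL, hr⟩ q
      exact ⟨⟨L, hL, hL.1.2 r hr q⟩, ⟨_, minLeftIdeal_mul hL q, ⟨r, hr, rfl⟩⟩⟩
  obtain ⟨L, hL, hpL⟩ := hKmin U hU hp
  have hLK : L ⊆ K := by
    have h1 : LeftIdealBS (L ∩ K) :=
      ⟨⟨p, hpL, hp⟩, fun z hz q => ⟨hL.1.2 z hz.1 q, (hKideal.2 z hz.2 q).1⟩⟩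
    have h2 := hL.2 _ h1 Set.inter_subset_left
    intro x hx
    rw [← h2] at hx
    exact hx.2
  have hLorb : orbBS p = L := hL.2 _ (orbBS_leftIdeal p) (orbBS_subset hL.1 hpL)
  have hcomp : IsCompact L := hLorb ▸ orbBS_isCompact p
  obtain ⟨e, heL, heidem⟩ := exists_idempotent_in_compact_subsemigroup
    (fun r => Ultrafilter.continuous_mul_left r) L hL.1.1 hcomp
    (fun x hx y hy => hL.1.2 y hy x)
  have hEq := hL.2 _ (minLeftIdeal_mul hL e).1
    (by rintro r ⟨x, hx, rfl⟩; exact hL.1.2 e heL x)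
  have hpmem : p ∈ (fun x => x * e) '' L := by rw [hEq]; exact hpL
  obtain ⟨y, hy, hye⟩ := hpmem
  have hpe : p * e = p := by
    rw [← hye, mul_assoc, heidem]
  rw [← hpe] at hA
  have hA' : {a : S | {b : S | a * b ∈ A} ∈ e} ∈ p :=
    (Ultrafilter.eventually_mul p e (· ∈ A)).mp hA
  obtain ⟨s, hs⟩ := Ultrafilter.nonempty_of_mem hA'
  exact ⟨s, e, hLK heL, heidem, hs⟩
end
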